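/- Let F be algebraically closed and suppose r is a solution of the classical Yang–Baxter equation on L with r + τ(r) L-invariant, and let λ ∈ F be nonzero. If R and R* are both Rota–Baxter operators of weight λ, then L decomposes as a direct sum of two Lie ideals L = I_1 ⊕ I_2 such that R(a) + R*(a) + λa ∈ Z(L) for all a ∈ I_1, and R([x, y]) = R*([x, y]) = 0 for all x ∈ I_2 and y ∈ L. -/

import Mathlib

open TensorProduct

section auxlemmas

variable {F : Type*} [Field F] {L : Type*} [LieRing L] [LieAlgebra F L]

private def lieRightHom (y : L) : L →+ L where
  toFun x := ⁅x, y⁆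
  map_add' a b := add_lie a b y
  map_zero' := zero_lie y

private def lieLeftHom (x : L) : L →+ L where
  toFun y := ⁅x, y⁆
  map_add' a b := lie_add x a b
  map_zero' := lie_zero x

private lemma sum_lie_fin {ι : Type*} [Fintype ι] (f : ι → L) (y : L) :
    ⁅∑ i, f i, y⁆ = ∑ i, ⁅f i, y⁆ :=
  map_sum (lieRightHom y) f Finset.univ

private lemma lie_sum_fin {ι : Type*} [Fintype ι] (x : L) (f : ι → L) :
    ⁅x, ∑ i, f i⁆ = ∑ i, ⁅x, f i⁆ :=
  map_sum (lieLeftHom x) f Finset.univ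

private lemma sum_smul_lie {ι : Type*} [Fintype ι] (c : ι → F) (u : ι → L) (y : L) :
    ⁅∑ i, c i • u i, y⁆ = ∑ i, c i • ⁅u i, y⁆ := by
  rw [sum_lie_fin]
  exact Finset.sum_congr rfl fun i _ => smul_lie _ _ _

private lemma lie_sum_smul {ι : Type*} [Fintype ι] (c : ι → F) (u : ι → L) (y : L) :
    ⁅y, ∑ i, c i • u i⁆ = ∑ i, c i • ⁅y, u i⁆ := by
  rw [lie_sum_fin]
  exact Finset.sum_congr rfl fun i _ => lie_smul _ _ _

private lemma key_dbl {ι κ : Type*} [Fintype ι] [Fintype κ]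
    (c : ι → F) (d : κ → F) (u : ι → L) (v : κ → L) :
    ⁅∑ i, c i • u i, ∑ j, d j • v j⁆ = ∑ i, ∑ j, (c i * d j) • ⁅u i, v j⁆ := by
  rw [sum_smul_lie]
  refine Finset.sum_congr rfl fun i _ => ?_
  rw [lie_sum_smul, Finset.smul_sum]
  exact Finset.sum_congr rfl fun j _ => by rw [smul_smul]

end auxlemmas

private lemma exists_relcompl {F M : Type*} [Field F] [AddCommGroup M] [Module F M]
    (U W : Submodule F M) (h : U ≤ W) :
    ∃ X : Submodule F M, X ≤ W ∧ U ⊓ X = ⊥ ∧ U ⊔ X = W := by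
  obtain ⟨X', hX'⟩ := Submodule.exists_isCompl (U.comap W.subtype)
  have hU : (U.comap W.subtype).map W.subtype = U := by
    rw [Submodule.map_comap_subtype]
    exact inf_eq_right.mpr h
  refine ⟨X'.map W.subtype, Submodule.map_subtype_le _ _, ?_, ?_⟩
  · rw [← hU, ← Submodule.map_inf _ (Submodule.injective_subtype W), hX'.inf_eq_bot,
      Submodule.map_bot]
  · rw [← hU, ← Submodule.map_sup, hX'.sup_eq_top, Submodule.map_top, Submodule.range_subtype]

set_option maxHeartbeats 2000000 in
theorem stmt_16
    (F : Type*) [Field F] [CharZero F]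
    (L : Type*) [LieRing L] [LieAlgebra F L] [FiniteDimensional F L]
    (ω : LinearMap.BilinForm F L)
    (hnd : ω.Nondegenerate)
    (hsymm : ∀ x y : L, ω x y = ω y x)
    (hinv : ∀ x y z : L, ω ⁅x, y⁆ z = ω x ⁅y, z⁆)
    (ι : Type*) [Fintype ι] (a b : ι → L)
    (R Rstar : L →ₗ[F] L)
    (hR : ∀ x : L, R x = ∑ i, ω (b i) x • a i)
    (hadj : ∀ x y : L, ω (R x) y = ω x (Rstar y))
    [IsAlgClosed F]
    (hCYBE : ∑ i, ∑ j, (⁅a i, a j⁆ ⊗ₜ[F] (b i ⊗ₜ[F] b j)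
        - a i ⊗ₜ[F] (⁅a j, b i⁆ ⊗ₜ[F] b j)
        + a i ⊗ₜ[F] (a j ⊗ₜ[F] ⁅b i, b j⁆)) = (0 : L ⊗[F] (L ⊗[F] L)))
    (hinvr : ∀ y : L, ∑ i, (⁅a i, y⁆ ⊗ₜ[F] b i + a i ⊗ₜ[F] ⁅b i, y⁆
        + ⁅b i, y⁆ ⊗ₜ[F] a i + b i ⊗ₜ[F] ⁅a i, y⁆) = (0 : L ⊗[F] L))
    (lam : F) (hlam : lam ≠ 0)
    (hRB : ∀ x y : L, ⁅R x, R y⁆ = R (⁅R x, y⁆ + ⁅x, R y⁆ + lam • ⁅x, y⁆))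
    (hRBs : ∀ x y : L, ⁅Rstar x, Rstar y⁆ = Rstar (⁅Rstar x, y⁆ + ⁅x, Rstar y⁆ + lam • ⁅x, y⁆)) :
    ∃ I₁ I₂ : LieIdeal F L,
      I₁ ⊔ I₂ = ⊤ ∧
      I₁ ⊓ I₂ = ⊥ ∧
      (∀ x ∈ I₁, R x + Rstar x + lam • x ∈ LieAlgebra.center F L) ∧
      (∀ x ∈ I₂, ∀ y : L, R ⁅x, y⁆ = 0 ∧ Rstar ⁅x, y⁆ = 0) := by
  classical
  -- basic bilinear form sum lemmas
  have ωsum : ∀ (c : ι → F) (u : ι → L) (w : L),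
      ω (∑ i, c i • u i) w = ∑ i, c i * ω (u i) w := by
    intro c u w
    simp [map_sum, LinearMap.sum_apply, LinearMap.smul_apply, smul_eq_mul]
  have ωsum' : ∀ (c : ι → F) (u : ι → L) (w : L),
      ω w (∑ i, c i • u i) = ∑ i, c i * ω w (u i) := by
    intro c u w
    simp [map_sum, map_smul, smul_eq_mul]
  -- formula for Rstar
  have hRs : ∀ x : L, Rstar x = ∑ i, ω (a i) x • b i := by
    intro x
    have key : ∀ u : L, ω (Rstar x - ∑ i, ω (a i) x • b i) u = 0 := by
      intro u
      have h1 : ω u (Rstar x) = ∑ i, ω (b i) u * ω (a i) x := by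
        rw [← hadj u x, hR u, ωsum]
      have h2 : ω u (∑ i, ω (a i) x • b i) = ∑ i, ω (a i) x * ω u (b i) := ωsum' _ _ _
      rw [map_sub, LinearMap.sub_apply, hsymm (Rstar x) u, hsymm _ u, h1, h2]
      rw [Finset.sum_congr rfl (fun i _ => by rw [hsymm u (b i)]; ring :
        ∀ i ∈ Finset.univ, ω (a i) x * ω u (b i) = ω (b i) u * ω (a i) x)]
      exact sub_self _
    exact sub_eq_zero.mp (hnd.1 _ key)
  -- contracted invariance identity
  have hA : ∀ y z : L, ⁅R z, y⁆ + R ⁅y, z⁆ + ⁅Rstar z, y⁆ + Rstar ⁅y, z⁆ = 0 := by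
    intro y z
    let φ : L ⊗[F] L →ₗ[F] L :=
      TensorProduct.lift (((LinearMap.lsmul F L).comp (ω.flip z)).flip)
    have hφ : ∀ u v : L, φ (u ⊗ₜ[F] v) = ω v z • u := by
      intro u v
      simp [φ, TensorProduct.lift.tmul]
    have h0 := congrArg φ (hinvr y)
    rw [map_sum, map_zero] at h0
    have h0' : ∑ i, (ω (b i) z • ⁅a i, y⁆ + ω ⁅b i, y⁆ z • a i
        + ω (a i) z • ⁅b i, y⁆ + ω ⁅a i, y⁆ z • b i) = 0 := by
      rw [← h0]
      refine Finset.sum_congr rfl fun i _ => ?_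
      rw [map_add, map_add, map_add, hφ, hφ, hφ, hφ]
    rw [Finset.sum_add_distrib, Finset.sum_add_distrib, Finset.sum_add_distrib] at h0'
    have e1 : ∑ i, ω (b i) z • ⁅a i, y⁆ = ⁅R z, y⁆ := by
      rw [hR z, sum_smul_lie]
    have e2 : ∑ i, ω ⁅b i, y⁆ z • a i = R ⁅y, z⁆ := by
      rw [hR ⁅y, z⁆]
      exact Finset.sum_congr rfl fun i _ => by rw [hinv (b i) y z]
    have e3 : ∑ i, ω (a i) z • ⁅b i, y⁆ = ⁅Rstar z, y⁆ := by
      rw [hRs z, sum_smul_lie]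
    have e4 : ∑ i, ω ⁅a i, y⁆ z • b i = Rstar ⁅y, z⁆ := by
      rw [hRs ⁅y, z⁆]
      exact Finset.sum_congr rfl fun i _ => by rw [hinv (a i) y z]
    rw [e1, e2, e3, e4] at h0'
    exact h0'
  -- contracted CYBE identity #1
  have h1 : ∀ y z : L, ⁅R y, R z⁆ - R ⁅y, R z⁆ + R ⁅Rstar y, z⁆ = 0 := by
    intro y z
    let h : L ⊗[F] L →ₗ[F] F :=
      TensorProduct.lift ((ω.flip y).smulRight (ω.flip z))
    have htm : ∀ v w : L, h (v ⊗ₜ[F] w) = ω v y * ω w z := by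
      intro v w
      simp [h, TensorProduct.lift.tmul, LinearMap.smulRight_apply, smul_eq_mul]
    let φ : L ⊗[F] (L ⊗[F] L) →ₗ[F] L :=
      TensorProduct.lift (((LinearMap.lsmul F L).comp h).flip)
    have hφ : ∀ (u : L) (t : L ⊗[F] L), φ (u ⊗ₜ[F] t) = h t • u := by
      intro u t
      simp [φ, TensorProduct.lift.tmul]
    have h0 := congrArg φ hCYBE
    rw [map_sum, map_zero] at h0
    have h0' : ∑ i, ∑ j, ((ω (b i) y * ω (b j) z) • ⁅a i, a j⁆
        - (ω ⁅a j, b i⁆ y * ω (b j) z) • a i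
        + (ω (a j) y * ω ⁅b i, b j⁆ z) • a i) = 0 := by
      rw [← h0]
      refine Finset.sum_congr rfl fun i _ => ?_
      rw [map_sum]
      refine Finset.sum_congr rfl fun j _ => ?_
      rw [map_add, map_sub, hφ, hφ, hφ, htm, htm, htm]
    rw [Finset.sum_congr rfl (fun i (_ : i ∈ Finset.univ) => by
        rw [Finset.sum_add_distrib, Finset.sum_sub_distrib] :
      ∀ i ∈ Finset.univ, ∑ j, ((ω (b i) y * ω (b j) z) • ⁅a i, a j⁆
        - (ω ⁅a j, b i⁆ y * ω (b j) z) • a i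
        + (ω (a j) y * ω ⁅b i, b j⁆ z) • a i)
      = (∑ j, (ω (b i) y * ω (b j) z) • ⁅a i, a j⁆
        - ∑ j, (ω ⁅a j, b i⁆ y * ω (b j) z) • a i)
        + ∑ j, (ω (a j) y * ω ⁅b i, b j⁆ z) • a i),
      Finset.sum_add_distrib, Finset.sum_sub_distrib] at h0'
    have E1 : ∑ i, ∑ j, (ω (b i) y * ω (b j) z) • ⁅a i, a j⁆ = ⁅R y, R z⁆ := by
      rw [hR y, hR z, key_dbl]
    have E2 : ∑ i, ∑ j, (ω ⁅a j, b i⁆ y * ω (b j) z) • a i = R ⁅y, R z⁆ := by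
      have inner : ∀ i, ∑ j, ω ⁅a j, b i⁆ y * ω (b j) z = ω (b i) ⁅y, R z⁆ := by
        intro i
        rw [Finset.sum_congr rfl (fun j _ => by rw [hinv (a j) (b i) y]; ring :
          ∀ j ∈ Finset.univ, ω ⁅a j, b i⁆ y * ω (b j) z
            = ω (b j) z * ω (a j) ⁅b i, y⁆)]
        rw [show ∑ j, ω (b j) z * ω (a j) ⁅b i, y⁆ = ω (R z) ⁅b i, y⁆ by
          rw [hR z, ωsum]]
        rw [hsymm (R z) ⁅b i, y⁆, hinv (b i) y (R z)]
      calc ∑ i, ∑ j, (ω ⁅a j, b i⁆ y * ω (b j) z) • a i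
          = ∑ i, (∑ j, ω ⁅a j, b i⁆ y * ω (b j) z) • a i :=
            Finset.sum_congr rfl fun i _ => (Finset.sum_smul).symm
        _ = ∑ i, ω (b i) ⁅y, R z⁆ • a i :=
            Finset.sum_congr rfl fun i _ => by rw [inner i]
        _ = R ⁅y, R z⁆ := (hR _).symm
    have E3 : ∑ i, ∑ j, (ω (a j) y * ω ⁅b i, b j⁆ z) • a i = R ⁅Rstar y, z⁆ := by
      have inner : ∀ i, ∑ j, ω (a j) y * ω ⁅b i, b j⁆ z = ω (b i) ⁅Rstar y, z⁆ := by
        intro i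
        rw [Finset.sum_congr rfl (fun j _ => by rw [hinv (b i) (b j) z] :
          ∀ j ∈ Finset.univ, ω (a j) y * ω ⁅b i, b j⁆ z
            = ω (a j) y * ω (b i) ⁅b j, z⁆)]
        rw [hRs y, sum_smul_lie, ωsum']
      calc ∑ i, ∑ j, (ω (a j) y * ω ⁅b i, b j⁆ z) • a i
          = ∑ i, (∑ j, ω (a j) y * ω ⁅b i, b j⁆ z) • a i :=
            Finset.sum_congr rfl fun i _ => (Finset.sum_smul).symm
        _ = ∑ i, ω (b i) ⁅Rstar y, z⁆ • a i :=
            Finset.sum_congr rfl fun i _ => by rw [inner i]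
        _ = R ⁅Rstar y, z⁆ := (hR _).symm
    rw [E1, E2, E3] at h0'
    exact h0'
  -- contracted CYBE identity #2
  have h2 : ∀ y z : L, Rstar ⁅y, R z⁆ - Rstar ⁅Rstar y, z⁆ + ⁅Rstar y, Rstar z⁆ = 0 := by
    intro y z
    let ψ : L ⊗[F] L →ₗ[F] L :=
      TensorProduct.lift ((LinearMap.lsmul F L).comp (ω.flip z))
    have hψ : ∀ v w : L, ψ (v ⊗ₜ[F] w) = ω v z • w := by
      intro v w
      simp [ψ, TensorProduct.lift.tmul]
    let φ : L ⊗[F] (L ⊗[F] L) →ₗ[F] L :=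
      TensorProduct.lift ((ω.flip y).smulRight ψ)
    have hφ : ∀ (u : L) (t : L ⊗[F] L), φ (u ⊗ₜ[F] t) = ω u y • ψ t := by
      intro u t
      simp [φ, TensorProduct.lift.tmul, LinearMap.smulRight_apply]
    have h0 := congrArg φ hCYBE
    rw [map_sum, map_zero] at h0
    have h0' : ∑ i, ∑ j, ((ω ⁅a i, a j⁆ y * ω (b i) z) • b j
        - (ω (a i) y * ω ⁅a j, b i⁆ z) • b j
        + (ω (a i) y * ω (a j) z) • ⁅b i, b j⁆) = 0 := by
      rw [← h0]
      refine Finset.sum_congr rfl fun i _ => ?_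
      rw [map_sum]
      refine Finset.sum_congr rfl fun j _ => ?_
      rw [map_add, map_sub, hφ, hφ, hφ, hψ, hψ, hψ, smul_smul, smul_smul, smul_smul]
    rw [Finset.sum_congr rfl (fun i (_ : i ∈ Finset.univ) => by
        rw [Finset.sum_add_distrib, Finset.sum_sub_distrib] :
      ∀ i ∈ Finset.univ, ∑ j, ((ω ⁅a i, a j⁆ y * ω (b i) z) • b j
        - (ω (a i) y * ω ⁅a j, b i⁆ z) • b j
        + (ω (a i) y * ω (a j) z) • ⁅b i, b j⁆)
      = (∑ j, (ω ⁅a i, a j⁆ y * ω (b i) z) • b j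
        - ∑ j, (ω (a i) y * ω ⁅a j, b i⁆ z) • b j)
        + ∑ j, (ω (a i) y * ω (a j) z) • ⁅b i, b j⁆),
      Finset.sum_add_distrib, Finset.sum_sub_distrib] at h0'
    have E1 : ∑ i, ∑ j, (ω ⁅a i, a j⁆ y * ω (b i) z) • b j = Rstar ⁅y, R z⁆ := by
      rw [Finset.sum_comm]
      have inner : ∀ j, ∑ i, ω ⁅a i, a j⁆ y * ω (b i) z = ω (a j) ⁅y, R z⁆ := by
        intro j
        rw [Finset.sum_congr rfl (fun i _ => by rw [hinv (a i) (a j) y]; ring :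
          ∀ i ∈ Finset.univ, ω ⁅a i, a j⁆ y * ω (b i) z
            = ω (b i) z * ω (a i) ⁅a j, y⁆)]
        rw [show ∑ i, ω (b i) z * ω (a i) ⁅a j, y⁆ = ω (R z) ⁅a j, y⁆ by
          rw [hR z, ωsum]]
        rw [hsymm (R z) ⁅a j, y⁆, hinv (a j) y (R z)]
      calc ∑ j, ∑ i, (ω ⁅a i, a j⁆ y * ω (b i) z) • b j
          = ∑ j, (∑ i, ω ⁅a i, a j⁆ y * ω (b i) z) • b j :=
            Finset.sum_congr rfl fun j _ => (Finset.sum_smul).symm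
        _ = ∑ j, ω (a j) ⁅y, R z⁆ • b j :=
            Finset.sum_congr rfl fun j _ => by rw [inner j]
        _ = Rstar ⁅y, R z⁆ := (hRs _).symm
    have E2 : ∑ i, ∑ j, (ω (a i) y * ω ⁅a j, b i⁆ z) • b j = Rstar ⁅Rstar y, z⁆ := by
      have inner : ∀ i, ∑ j, (ω (a i) y * ω ⁅a j, b i⁆ z) • b j
          = ω (a i) y • Rstar ⁅b i, z⁆ := by
        intro i
        rw [Finset.sum_congr rfl (fun j _ => by
            rw [hinv (a j) (b i) z, ← smul_smul] :
          ∀ j ∈ Finset.univ, (ω (a i) y * ω ⁅a j, b i⁆ z) • b j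
            = ω (a i) y • (ω (a j) ⁅b i, z⁆ • b j)),
          ← Finset.smul_sum, ← hRs ⁅b i, z⁆]
      rw [Finset.sum_congr rfl fun i _ => inner i]
      rw [show ∑ i, ω (a i) y • Rstar ⁅b i, z⁆
          = Rstar (∑ i, ω (a i) y • ⁅b i, z⁆) by
        rw [map_sum]
        exact Finset.sum_congr rfl fun i _ => (map_smul _ _ _).symm]
      rw [← sum_smul_lie, ← hRs y]
    have E3 : ∑ i, ∑ j, (ω (a i) y * ω (a j) z) • ⁅b i, b j⁆ = ⁅Rstar y, Rstar z⁆ := by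
      rw [hRs y, hRs z, key_dbl]
    rw [E1, E2, E3] at h0'
    exact h0'
  -- T := R + R* + lam • id, as pointwise expression
  -- main consequence 1 : R ⁅T y, z⁆ = 0
  have hT1 : ∀ y z : L, R ⁅R y + Rstar y + lam • y, z⁆ = 0 := by
    intro y z
    have e1 : ⁅R y, R z⁆ = R ⁅R y, z⁆ + R ⁅y, R z⁆ + lam • R ⁅y, z⁆ := by
      rw [hRB y z, map_add, map_add, map_smul]
    have e2 := h1 y z
    have e3 : R ⁅R y + Rstar y + lam • y, z⁆
        = ⁅R y, R z⁆ - R ⁅y, R z⁆ + R ⁅Rstar y, z⁆ := by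
      rw [add_lie, add_lie, smul_lie, map_add, map_add, map_smul, e1]
      abel
    rw [e3, e2]
  -- main consequence 2 : Rstar ⁅y, T z⁆ = 0
  have hT2' : ∀ y z : L, Rstar ⁅y, R z + Rstar z + lam • z⁆ = 0 := by
    intro y z
    have e1 : ⁅Rstar y, Rstar z⁆
        = Rstar ⁅Rstar y, z⁆ + Rstar ⁅y, Rstar z⁆ + lam • Rstar ⁅y, z⁆ := by
      rw [hRBs y z, map_add, map_add, map_smul]
    have e2 := h2 y z
    have e3 : Rstar ⁅y, R z + Rstar z + lam • z⁆
        = Rstar ⁅y, R z⁆ - Rstar ⁅Rstar y, z⁆ + ⁅Rstar y, Rstar z⁆ := by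
      rw [lie_add, lie_add, lie_smul, map_add, map_add, map_smul, e1]
      abel
    rw [e3, e2]
  have hT1' : ∀ y z : L, R ⁅y, R z + Rstar z + lam • z⁆ = 0 := by
    intro y z
    rw [← lie_skew, map_neg, hT1, neg_zero]
  have hT2 : ∀ y z : L, Rstar ⁅R y + Rstar y + lam • y, z⁆ = 0 := by
    intro y z
    rw [← lie_skew, map_neg, hT2', neg_zero]
  -- T commutes with brackets
  have hTr : ∀ y z : L, R ⁅y, z⁆ + Rstar ⁅y, z⁆ + lam • ⁅y, z⁆
      = ⁅y, R z + Rstar z + lam • z⁆ := by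
    intro y z
    have := hA y z
    have e : R ⁅y, z⁆ + Rstar ⁅y, z⁆ = -⁅R z, y⁆ - ⁅Rstar z, y⁆ := by
      have h' : R ⁅y, z⁆ + Rstar ⁅y, z⁆ + (⁅R z, y⁆ + ⁅Rstar z, y⁆) = 0 := by
        rw [← this]; abel
      linear_combination (norm := abel) h'
    rw [lie_add, lie_add, lie_smul, e, ← lie_skew y (R z), ← lie_skew y (Rstar z)]
    abel
  -- the N-lemma : ker R ∩ ker R* is invariant & brackets killed
  have hN : ∀ x : L, R x = 0 → Rstar x = 0 → ∀ z : L, R ⁅x, z⁆ = 0 ∧ Rstar ⁅x, z⁆ = 0 := by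
    intro x hx hx' z
    have k1 : R ⁅x, R z⁆ = 0 := by
      have := h1 x z
      rw [hx, hx', zero_lie, zero_lie, map_zero] at this
      -- this : 0 - R ⁅x, R z⁆ + 0 = 0
      linear_combination (norm := abel) -this
    have k2 : Rstar ⁅x, Rstar z⁆ = 0 := by
      have := h2 z x
      rw [hx, hx', lie_zero, map_zero] at this
      -- this : 0 - Rstar ⁅Rstar z, x⁆ + ⁅Rstar z, 0⁆ = 0
      have : Rstar ⁅Rstar z, x⁆ = 0 := by
        rw [lie_zero] at this
        linear_combination (norm := abel) -this
      rw [← lie_skew, map_neg, this, neg_zero]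
    constructor
    · have := hRB x z
      rw [hx, zero_lie, zero_lie, map_add, map_add, map_smul, k1] at this
      -- this : 0 = R 0 + 0 + lam • R ⁅x, z⁆  (note ⁅R x, z⁆ = ⁅0,z⁆ = 0)
      have h0 : lam • R ⁅x, z⁆ = 0 := by
        rw [map_zero] at this
        linear_combination (norm := abel) -this
      exact (smul_eq_zero.mp h0).resolve_left hlam
    · have := hRBs x z
      rw [hx', zero_lie, zero_lie, map_add, map_add, map_smul, k2] at this
      have h0 : lam • Rstar ⁅x, z⁆ = 0 := by
        rw [map_zero] at this
        linear_combination (norm := abel) -this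
      exact (smul_eq_zero.mp h0).resolve_left hlam
  
  -- Submodules
  set T : L →ₗ[F] L := R + Rstar + lam • LinearMap.id with hTdef
  have hT : ∀ x : L, T x = R x + Rstar x + lam • x := by
    intro x
    simp [hTdef, LinearMap.add_apply, LinearMap.smul_apply]
  have hTzero : ∀ y z : L, R ⁅T y, z⁆ = 0 ∧ Rstar ⁅T y, z⁆ = 0 := by
    intro y z
    rw [hT]
    exact ⟨hT1 y z, hT2 y z⟩
  have hTbr : ∀ y z : L, T ⁅y, z⁆ = ⁅y, T z⁆ := by
    intro y z
    rw [hT, hT, hTr]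
  -- J = ker T
  have Jm : Submodule F L := LinearMap.ker T
  clear Jm
  -- we define the pieces
  let Jm : Submodule F L := LinearMap.ker T
  let Mm : Submodule F L := LinearMap.ker (R + Rstar)
  let Km : Submodule F L := Submodule.comap T
    (LieAlgebra.center F L : LieIdeal F L).toSubmodule
  let Pm : Submodule F L :=
    { carrier := {x | ∀ z : L, R ⁅x, z⁆ = 0 ∧ Rstar ⁅x, z⁆ = 0}
      add_mem' := by
        intro p q hp hq z
        constructor
        · rw [add_lie, map_add, (hp z).1, (hq z).1, add_zero]
        · rw [add_lie, map_add, (hp z).2, (hq z).2, add_zero]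
      zero_mem' := by
        intro z
        constructor <;> rw [zero_lie, map_zero]
      smul_mem' := by
        intro c p hp z
        constructor
        · rw [smul_lie, map_smul, (hp z).1, smul_zero]
        · rw [smul_lie, map_smul, (hp z).2, smul_zero] }
  have memKm : ∀ x : L, x ∈ Km ↔ ∀ z : L, ⁅z, T x⁆ = 0 := by
    intro x
    constructor
    · intro h z
      exact (LieModule.mem_maxTrivSubmodule F L L (T x)).mp h z
    · intro h
      exact (LieModule.mem_maxTrivSubmodule F L L (T x)).mpr h
  have memPm : ∀ x : L, x ∈ Pm ↔ ∀ z : L, R ⁅x, z⁆ = 0 ∧ Rstar ⁅x, z⁆ = 0 := fun _ => Iff.rfl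
  have memJm : ∀ x : L, x ∈ Jm ↔ T x = 0 := fun x => LinearMap.mem_ker
  have memMm : ∀ x : L, x ∈ Mm ↔ R x + Rstar x = 0 := fun x => LinearMap.mem_ker
  -- inclusions
  have hJK : Jm ≤ Km := by
    intro x hx
    rw [memKm]
    intro z
    rw [(memJm x).mp hx, lie_zero]
  have hMP : Mm ≤ Pm := by
    intro x hx
    rw [memPm]
    intro z
    have hx' : R x + Rstar x = 0 := (memMm x).mp hx
    have hxx : x = lam⁻¹ • T x := by
      rw [hT, hx', zero_add, smul_smul, inv_mul_cancel₀ hlam, one_smul]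
    constructor
    · rw [hxx, smul_lie, map_smul, (hTzero x z).1, smul_zero]
    · rw [hxx, smul_lie, map_smul, (hTzero x z).2, smul_zero]
  -- bracket conditions
  have hKJ : ∀ x z : L, x ∈ Km → ⁅z, x⁆ ∈ Jm := by
    intro x z hx
    rw [memJm, hTbr]
    exact (memKm x).mp hx z
  have hPM : ∀ x z : L, x ∈ Pm → ⁅z, x⁆ ∈ Mm := by
    intro x z hx
    rw [memMm]
    have h1 := ((memPm x).mp hx z).1
    have h2 := ((memPm x).mp hx z).2
    rw [← lie_skew, map_neg, map_neg, h1, h2, neg_zero, add_zero]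
  -- sup is everything
  have hKP : Km ⊔ Pm = ⊤ := by
    rw [eq_top_iff]
    intro x _
    have hdecomp : x = (x - lam⁻¹ • T x) + lam⁻¹ • T x := by abel
    have hu : x - lam⁻¹ • T x ∈ Km := by
      rw [memKm]
      intro m
      have key : ⁅m, T (T x)⁆ = lam • ⁅m, T x⁆ := by
        rw [← hTbr m (T x), hT ⁅m, T x⁆]
        have r1 : R ⁅m, T x⁆ = 0 := by
          rw [← lie_skew, map_neg, (hTzero x m).1, neg_zero]
        have r2 : Rstar ⁅m, T x⁆ = 0 := by
          rw [← lie_skew, map_neg, (hTzero x m).2, neg_zero]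
        rw [r1, r2, zero_add, zero_add]
      rw [map_sub, map_smul, lie_sub, lie_smul, key, smul_smul,
        inv_mul_cancel₀ hlam, one_smul, sub_self]
    have hv : lam⁻¹ • T x ∈ Pm := by
      rw [memPm]
      intro z
      constructor
      · rw [smul_lie, map_smul, (hTzero x z).1, smul_zero]
      · rw [smul_lie, map_smul, (hTzero x z).2, smul_zero]
    rw [hdecomp]
    exact Submodule.add_mem_sup hu hv
  -- J ∩ M = ⊥
  have hJM : Jm ⊓ Mm = ⊥ := by
    rw [eq_bot_iff]
    rintro x ⟨hx1, hx2⟩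
    have e1 : T x = 0 := (memJm x).mp hx1
    have e2 : R x + Rstar x = 0 := (memMm x).mp hx2
    have : lam • x = 0 := by
      rw [hT, e2, zero_add] at e1
      exact e1
    have := (smul_eq_zero.mp this).resolve_left hlam
    simp [this]
  -- complements
  obtain ⟨X, hXle, hXinf, hXsup⟩ := exists_relcompl ((Jm ⊔ Mm) ⊓ Km) Km inf_le_right
  obtain ⟨Y, hYle, hYinf, hYsup⟩ :=
    exists_relcompl ((Jm ⊔ Mm ⊔ X) ⊓ Pm) Pm inf_le_right
  have hXK : X ≤ Km := hXle
  have hYP : Y ≤ Pm := hYle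
  have hXJM : ∀ x : L, x ∈ X → x ∈ Jm ⊔ Mm → x = 0 := by
    intro x hx hx'
    have : x ∈ ((Jm ⊔ Mm) ⊓ Km) ⊓ X := ⟨⟨hx', hXK hx⟩, hx⟩
    rwa [hXinf, Submodule.mem_bot] at this
  have hYJMX : ∀ x : L, x ∈ Y → x ∈ Jm ⊔ Mm ⊔ X → x = 0 := by
    intro x hx hx'
    have : x ∈ ((Jm ⊔ Mm ⊔ X) ⊓ Pm) ⊓ Y := ⟨⟨hx', hYP hx⟩, hx⟩
    rwa [hYinf, Submodule.mem_bot] at this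
  -- the ideals as submodules
  let I₁s : Submodule F L := Jm ⊔ X
  let I₂s : Submodule F L := Mm ⊔ Y
  have hI₁K : I₁s ≤ Km := sup_le hJK hXK
  have hI₂P : I₂s ≤ Pm := sup_le hMP hYP
  -- Lie ideals
  let I₁ : LieIdeal F L :=
    { I₁s with
      lie_mem := by
        intro z m hm
        have : m ∈ Km := hI₁K hm
        exact Submodule.mem_sup_left (hKJ m z this) }
  let I₂ : LieIdeal F L :=
    { I₂s with
      lie_mem := by
        intro z m hm
        have : m ∈ Pm := hI₂P hm
        exact Submodule.mem_sup_left (hPM m z this) }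
  have memI₁ : ∀ x : L, x ∈ I₁ ↔ x ∈ I₁s := fun _ => Iff.rfl
  have memI₂ : ∀ x : L, x ∈ I₂ ↔ x ∈ I₂s := fun _ => Iff.rfl
  refine ⟨I₁, I₂, ?_, ?_, ?_, ?_⟩
  · -- sup = ⊤
    have hS : I₁s ⊔ I₂s = ⊤ := by
      rw [eq_top_iff]
      rintro v -
      have hv : v ∈ Km ⊔ Pm := by rw [hKP]; exact Submodule.mem_top
      obtain ⟨u, hu, w, hw, rfl⟩ := Submodule.mem_sup.mp hv
      have hu' : u ∈ I₁s ⊔ I₂s := by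
        have h' : u ∈ ((Jm ⊔ Mm) ⊓ Km) ⊔ X := by rw [hXsup]; exact hu
        obtain ⟨p, hp, x, hx, rfl⟩ := Submodule.mem_sup.mp h'
        obtain ⟨j, hj, m, hm, rfl⟩ := Submodule.mem_sup.mp hp.1
        refine add_mem (add_mem ?_ ?_) ?_
        · exact Submodule.mem_sup_left (Submodule.mem_sup_left hj)
        · exact Submodule.mem_sup_right (Submodule.mem_sup_left hm)
        · exact Submodule.mem_sup_left (Submodule.mem_sup_right hx)
      have hw' : w ∈ I₁s ⊔ I₂s := by
        have h' : w ∈ ((Jm ⊔ Mm ⊔ X) ⊓ Pm) ⊔ Y := by rw [hYsup]; exact hw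
        obtain ⟨p, hp, y, hy, rfl⟩ := Submodule.mem_sup.mp h'
        obtain ⟨q, hq, x, hx, rfl⟩ := Submodule.mem_sup.mp hp.1
        obtain ⟨j, hj, m, hm, rfl⟩ := Submodule.mem_sup.mp hq
        refine add_mem (add_mem (add_mem ?_ ?_) ?_) ?_
        · exact Submodule.mem_sup_left (Submodule.mem_sup_left hj)
        · exact Submodule.mem_sup_right (Submodule.mem_sup_left hm)
        · exact Submodule.mem_sup_left (Submodule.mem_sup_right hx)
        · exact Submodule.mem_sup_right (Submodule.mem_sup_right hy)
      exact add_mem hu' hw'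
    rw [← LieSubmodule.toSubmodule_inj, LieSubmodule.sup_toSubmodule,
      LieSubmodule.top_toSubmodule]
    exact hS
  · -- inf = ⊥
    have hI : I₁s ⊓ I₂s = ⊥ := by
      rw [eq_bot_iff]
      rintro v ⟨hv1, hv2⟩
      obtain ⟨j, hj, x, hx, hjx⟩ := Submodule.mem_sup.mp hv1
      obtain ⟨m, hm, y, hy, hmy⟩ := Submodule.mem_sup.mp hv2
      have hy0 : y = 0 := by
        apply hYJMX y hy
        have hyv : y = j + x - m := by
          rw [← hjx] at hmy
          rw [← hmy]; abel
        rw [hyv]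
        refine sub_mem (add_mem ?_ ?_) ?_
        · exact Submodule.mem_sup_left (Submodule.mem_sup_left hj)
        · exact Submodule.mem_sup_right hx
        · exact Submodule.mem_sup_left (Submodule.mem_sup_right hm)
      have hx0 : x = 0 := by
        apply hXJM x hx
        have hxv : x = m - j := by
          rw [hy0, add_zero] at hmy
          rw [← hjx] at hmy
          rw [hmy]; abel
        rw [hxv]
        exact sub_mem (Submodule.mem_sup_right hm) (Submodule.mem_sup_left hj)
      have hjm : j = m := by
        rw [hy0, add_zero] at hmy
        rw [hx0, add_zero] at hjx
        exact hjx.trans hmy.symm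
      have hj0 : j = 0 := by
        have hjj : j ∈ Jm ⊓ Mm := ⟨hj, hjm ▸ hm⟩
        rwa [hJM, Submodule.mem_bot] at hjj
      rw [Submodule.mem_bot, ← hjx, hx0, hj0, add_zero]
    rw [← LieSubmodule.toSubmodule_inj, LieSubmodule.inf_toSubmodule,
      LieSubmodule.bot_toSubmodule]
    exact hI
  · -- condition on I₁
    intro x hx
    have hxK : x ∈ Km := hI₁K ((memI₁ x).mp hx)
    have hc : T x ∈ (LieAlgebra.center F L : LieIdeal F L).toSubmodule := hxK
    rw [← hT x]
    exact hc
  · intro x hx y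
    exact (memPm x).mp (hI₂P ((memI₂ x).mp hx)) y
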